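/- For any continued fraction with positive integer partial quotients and all relevant denominators odd, the pattern 1, -1, -1, 1 cannot occur as four consecutive values (s_k/t_k), (s_{k+1}/t_{k+1}), (s_{k+2}/t_{k+2}), (s_{k+3}/t_{k+3}) of Jacobi symbols of convergents. -/
import Mathlib


/-- Numerators of continued fraction convergents: `cfS a k = s_k`
(with `s_{-1} = 1`, `s_0 = a_0`, `s_k = a_k s_{k-1} + s_{k-2}`). -/
def cfS (a : ℕ → ℤ) : ℕ → ℤ
  | 0 => a 0
  | 1 => a 1 * a 0 + 1
  | (k+2) => a (k+2) * cfS a (k+1) + cfS a k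

/-- Denominators of continued fraction convergents: `cfT a k = t_k`
(with `t_{-1} = 0`, `t_0 = 1`, `t_k = a_k t_{k-1} + t_{k-2}`). -/
def cfT (a : ℕ → ℤ) : ℕ → ℤ
  | 0 => 1
  | 1 => a 1
  | (k+2) => a (k+2) * cfT a (k+1) + cfT a k

lemma cfT_pos (a : ℕ → ℤ) (ha : ∀ i, 1 ≤ i → 0 < a i) : ∀ k, 0 < cfT a k
  | 0 => by simp [cfT]
  | 1 => by simpa [cfT] using ha 1 le_rfl
  | (k+2) => by
      have h1 := cfT_pos a ha (k+1)
      have h0 := cfT_pos a ha k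
      have h2 : 0 < a (k+2) := ha (k+2) (by omega)
      show 0 < a (k+2) * cfT a (k+1) + cfT a k
      nlinarith

lemma cf_det (a : ℕ → ℤ) : ∀ k, cfS a (k+1) * cfT a k - cfS a k * cfT a (k+1) = (-1)^k
  | 0 => by simp [cfS, cfT]; ring
  | (k+1) => by
      have h := cf_det a k
      show (a (k+2) * cfS a (k+1) + cfS a k) * cfT a (k+1)
          - cfS a (k+1) * (a (k+2) * cfT a (k+1) + cfT a k) = (-1)^(k+1)
      rw [pow_succ]
      linear_combination (-1 : ℤ) * h

lemma cf_coprime (a : ℕ → ℤ) (k : ℕ) :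
    Nat.Coprime (cfT a k).natAbs (cfT a (k+1)).natAbs := by
  have h := cf_det a k
  have hc : IsCoprime (cfT a k) (cfT a (k+1)) := by
    rcases Nat.even_or_odd k with hk | hk
    · rw [hk.neg_one_pow] at h
      exact ⟨cfS a (k+1), -(cfS a k), by linear_combination h⟩
    · rw [hk.neg_one_pow] at h
      exact ⟨-(cfS a (k+1)), cfS a k, by linear_combination -h⟩
  have := Int.isCoprime_iff_gcd_eq_one.mp hc
  simpa [Int.gcd] using this

lemma key (a : ℕ → ℤ) (ha : ∀ i, 1 ≤ i → 0 < a i) (k : ℕ)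
    (hok : Odd (cfT a k)) (hok1 : Odd (cfT a (k+1))) :
    jacobiSym (cfS a (k+1)) (cfT a (k+1)).natAbs *
      jacobiSym (cfS a k) (cfT a k).natAbs
    = (-1)^(k * ((cfT a (k+1)).natAbs/2) + (k+1) * ((cfT a k).natAbs/2)
        + ((cfT a k).natAbs/2) * ((cfT a (k+1)).natAbs/2)) := by
  set m := (cfT a k).natAbs with hm
  set n := (cfT a (k+1)).natAbs with hn
  have hmz : ((m : ℤ)) = cfT a k := Int.natAbs_of_nonneg (cfT_pos a ha k).le
  have hnz : ((n : ℤ)) = cfT a (k+1) := Int.natAbs_of_nonneg (cfT_pos a ha (k+1)).le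
  have hmo : Odd m := Int.natAbs_odd.mpr hok
  have hno : Odd n := Int.natAbs_odd.mpr hok1
  have hcop : Nat.Coprime m n := cf_coprime a k
  have hdet := cf_det a k
  -- A * C = (-1)^(k * (n/2))
  have hAC : jacobiSym (cfS a (k+1)) n * jacobiSym (m : ℤ) n = (-1)^(k * (n/2)) := by
    rw [← jacobiSym.mul_left]
    have hmod : jacobiSym (cfS a (k+1) * (m : ℤ)) n = jacobiSym ((-1)^k) n := by
      apply jacobiSym.mod_left'
      have hd : ((n : ℤ)) ∣ ((-1)^k : ℤ) - (cfS a (k+1) * (m : ℤ)) := by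
        refine ⟨-(cfS a k), ?_⟩
        rw [hmz, hnz]
        linear_combination -hdet
      exact Int.modEq_iff_dvd.mpr hd
    rw [hmod, jacobiSym.pow_left, jacobiSym.at_neg_one hno,
      ZMod.χ₄_eq_neg_one_pow (Nat.odd_iff.mp hno), ← pow_mul, mul_comm (n/2) k]
  -- B * D = (-1)^((k+1) * (m/2))
  have hBD : jacobiSym (cfS a k) m * jacobiSym (n : ℤ) m = (-1)^((k+1) * (m/2)) := by
    rw [← jacobiSym.mul_left]
    have hmod : jacobiSym (cfS a k * (n : ℤ)) m = jacobiSym ((-1)^(k+1)) m := by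
      apply jacobiSym.mod_left'
      have hd : ((m : ℤ)) ∣ ((-1)^(k+1) : ℤ) - (cfS a k * (n : ℤ)) := by
        refine ⟨-(cfS a (k+1)), ?_⟩
        rw [hmz, hnz, pow_succ]
        linear_combination hdet
      exact Int.modEq_iff_dvd.mpr hd
    rw [hmod, jacobiSym.pow_left, jacobiSym.at_neg_one hmo,
      ZMod.χ₄_eq_neg_one_pow (Nat.odd_iff.mp hmo), ← pow_mul, mul_comm (m/2) (k+1)]
  -- C * D = (-1)^(m/2 * (n/2))
  have hDD : jacobiSym (n : ℤ) m * jacobiSym (n : ℤ) m = 1 := by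
    have : Int.gcd (n : ℤ) m = 1 := by
      simpa [Int.gcd, Nat.coprime_comm] using hcop
    have := jacobiSym.sq_one (b := m) (a := (n : ℤ)) this
    rwa [sq] at this
  have hCD : jacobiSym (m : ℤ) n * jacobiSym (n : ℤ) m = (-1)^(m/2 * (n/2)) := by
    rw [jacobiSym.quadratic_reciprocity hmo hno, mul_assoc, hDD, mul_one]
  -- combine
  calc jacobiSym (cfS a (k+1)) n * jacobiSym (cfS a k) m
      = (jacobiSym (cfS a (k+1)) n * jacobiSym (m : ℤ) n) *
        (jacobiSym (cfS a k) m * jacobiSym (n : ℤ) m) *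
        (jacobiSym (m : ℤ) n * jacobiSym (n : ℤ) m) := by
        have hCC : jacobiSym (m : ℤ) n * jacobiSym (m : ℤ) n = 1 := by
          have : Int.gcd (m : ℤ) n = 1 := by simpa [Int.gcd] using hcop
          have := jacobiSym.sq_one (b := n) (a := (m : ℤ)) this
          rwa [sq] at this
        have hre : jacobiSym (cfS a (k+1)) n * jacobiSym (m : ℤ) n *
            (jacobiSym (cfS a k) m * jacobiSym (n : ℤ) m) *
            (jacobiSym (m : ℤ) n * jacobiSym (n : ℤ) m)
          = (jacobiSym (cfS a (k+1)) n * jacobiSym (cfS a k) m) *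
            ((jacobiSym (m : ℤ) n * jacobiSym (m : ℤ) n) *
             (jacobiSym (n : ℤ) m * jacobiSym (n : ℤ) m)) := by ring
        rw [hre, hCC, hDD, mul_one, mul_one]
    _ = (-1)^(k * (n/2)) * (-1)^((k+1) * (m/2)) * (-1)^(m/2 * (n/2)) := by
        rw [hAC, hBD, hCD]
    _ = (-1)^(k * (n/2) + (k+1) * (m/2) + m/2 * (n/2)) := by
        rw [pow_add, pow_add]

set_option maxHeartbeats 2000000 in
theorem no_pattern_one_neg_one_neg_one_one
    (a : ℕ → ℤ) (ha : ∀ i, 1 ≤ i → 0 < a i) :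
    ¬ ∃ k : ℕ,
      Odd (cfT a k) ∧ Odd (cfT a (k+1)) ∧ Odd (cfT a (k+2)) ∧ Odd (cfT a (k+3)) ∧
      jacobiSym (cfS a k) (cfT a k).natAbs = 1 ∧
      jacobiSym (cfS a (k+1)) (cfT a (k+1)).natAbs = -1 ∧
      jacobiSym (cfS a (k+2)) (cfT a (k+2)).natAbs = -1 ∧
      jacobiSym (cfS a (k+3)) (cfT a (k+3)).natAbs = 1 := by
  rintro ⟨k, h0, h1, h2, h3, j0, j1, j2, j3⟩
  have K1 := key a ha k h0 h1
  have K2 := key a ha (k+1) h1 h2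
  have K3 := key a ha (k+2) h2 h3
  rw [j0, j1] at K1
  rw [j1, j2] at K2
  rw [j2, j3] at K3
  set d0 := (cfT a k).natAbs / 2
  set d1 := (cfT a (k+1)).natAbs / 2
  set d2 := (cfT a (k+2)).natAbs / 2
  set d3 := (cfT a (k+3)).natAbs / 2
  have e1 : ¬ Even (k * d1 + (k+1) * d0 + d0 * d1) := by
    intro h
    rw [Even.neg_one_pow h] at K1
    norm_num at K1
  have e2 : Even ((k+1) * d2 + (k+1+1) * d1 + d1 * d2) := by
    by_contra h
    rw [Odd.neg_one_pow (Nat.not_even_iff_odd.mp h)] at K2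
    norm_num at K2
  have e3 : ¬ Even ((k+2) * d3 + (k+2+1) * d2 + d2 * d3) := by
    intro h
    rw [Even.neg_one_pow h] at K3
    norm_num at K3
  simp only [Nat.even_add, Nat.even_mul, Nat.even_add_one, even_two,
    Nat.not_even_one, iff_true, true_iff, iff_false, false_iff, not_not,
    not_or, not_and] at e1 e2 e3
  tauto
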